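/- For every ray x = (d,m) ∈ 𝓡 with d ≠ ±e₃ and all γ, t ∈ ℝ, the transformed ray (R_Z(γ), t·e₃)·x also has direction ≠ ±e₃, and g((R_Z(γ), t·e₃)·x) = t + g(x). -/

import Mathlib

set_option maxHeartbeats 1000000


noncomputable section
open scoped InnerProductSpace

/-- ℝ³ with the Euclidean norm. -/
abbrev E3 : Type := EuclideanSpace ℝ (Fin 3)

/-- Elements of SE(3): a pair of a 3×3 matrix and a translation vector. -/
abbrev SE3 : Type := Matrix (Fin 3) (Fin 3) ℝ × E3

/-- Matrix-vector multiplication on ℝ³. -/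
def mv (R : Matrix (Fin 3) (Fin 3) ℝ) (v : E3) : E3 := WithLp.toLp 2 (R.mulVec v)

/-- Cross product on ℝ³. -/
def cross3 (a b : E3) : E3 :=
  WithLp.toLp 2 ![a 1 * b 2 - a 2 * b 1, a 2 * b 0 - a 0 * b 2, a 0 * b 1 - a 1 * b 0]

/-- `R` is a special orthogonal 3×3 matrix: `RᵀR = I` and `det R = 1`. -/
def isSO3 (R : Matrix (Fin 3) (Fin 3) ℝ) : Prop :=
  R.transpose * R = 1 ∧ R.det = 1

/-- `(d, m)` are Plücker coordinates of an oriented line: `d` is a unit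
direction and `m` is a moment with `⟨d, m⟩ = 0`. -/
def isRay (d m : E3) : Prop := ‖d‖ = 1 ∧ ⟪d, m⟫_ℝ = 0

/-- The standard basis vector e₁. -/
def e1 : E3 := WithLp.toLp 2 ![1, 0, 0]

/-- The standard basis vector e₂. -/
def e2 : E3 := WithLp.toLp 2 ![0, 1, 0]

/-- The standard basis vector e₃. -/
def e3 : E3 := WithLp.toLp 2 ![0, 0, 1]

/-- Action of `(R, t) ∈ SE(3)` on Plücker coordinates:
`(R,t)·(d,m) = (Rd, Rm + t × (Rd))`. -/
def rayAct (R : Matrix (Fin 3) (Fin 3) ℝ) (t : E3) (d m : E3) : E3 × E3 :=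
  (mv R d, mv R m + cross3 t (mv R d))

/-- Multiplication in SE(3): `(R₁,t₁)·(R₂,t₂) = (R₁R₂, t₁ + R₁t₂)`. -/
def se3Mul (g₁ g₂ : SE3) : SE3 := (g₁.1 * g₂.1, g₁.2 + mv g₁.1 g₂.2)

/-- Inverse in SE(3) (for `g.1 ∈ SO(3)`): `(R,t)⁻¹ = (Rᵀ, -Rᵀt)`. -/
def se3Inv (g : SE3) : SE3 := (g.1.transpose, -(mv g.1.transpose g.2))

/-- Action of `g ∈ SE(3)` on the ray space. -/
def act (g : SE3) (x : E3 × E3) : E3 × E3 := rayAct g.1 g.2 x.1 x.2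

/-- Action of `g = (R,t) ∈ SE(3)` on points of ℝ³: `g·p = Rp + t`. -/
def actPt (g : SE3) (p : E3) : E3 := mv g.1 p + g.2

/-- The origin ray `η = (e₃, 0)`. -/
def eta : E3 × E3 := (e3, 0)

/-- The twist `h(g, x) = s(g·x)⁻¹ · g · s(x)` of a section `s`. -/
def twist (s : E3 × E3 → SE3) (g : SE3) (x : E3 × E3) : SE3 :=
  se3Mul (se3Inv (s (act g x))) (se3Mul g (s x))

/-- Rotation by γ about the z-axis. -/
def RZ (γ : ℝ) : Matrix (Fin 3) (Fin 3) ℝ :=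
  !![Real.cos γ, -Real.sin γ, 0; Real.sin γ, Real.cos γ, 0; 0, 0, 1]

/-- Rotation by β about the y-axis. -/
def RY (β : ℝ) : Matrix (Fin 3) (Fin 3) ℝ :=
  !![Real.cos β, 0, Real.sin β; 0, 1, 0; -Real.sin β, 0, Real.cos β]

/-- The underlying line of the ray with Plücker coordinates `(d, m)`:
`L(d,m) = {p : p × d = m}`. -/
def lineOf (d m : E3) : Set E3 := {p : E3 | cross3 p d = m}

/-- Infimum of the Euclidean distances between points of the line `L(d,m)`
and points of the z-axis. -/
def Dzaxis (d m : E3) : ℝ :=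
  sInf {r : ℝ | ∃ p ∈ lineOf d m, ∃ s : ℝ, r = dist p (s • e3)}

/-- The z-coordinate `g(x) = e₃·(c - λ·d)` (with `c = d × m` and
`λ = ((e₁·c)(e₁·d) + (e₂·c)(e₂·d))/(1 - (e₃·d)²)`) of the point of `L(d,m)`
closest to the z-axis (for `d ≠ ±e₃`). -/
def zfoot (d m : E3) : ℝ :=
  ⟪e3, cross3 d m - ((⟪e1, cross3 d m⟫_ℝ * ⟪e1, d⟫_ℝ + ⟪e2, cross3 d m⟫_ℝ * ⟪e2, d⟫_ℝ)
      / (1 - ⟪e3, d⟫_ℝ ^ 2)) • d⟫_ℝ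

lemma zfoot_eq (d m : E3) (hne : 1 - (d 2)^2 ≠ 0) :
    zfoot d m = (d 0 * m 1 - d 1 * m 0) / (1 - (d 2)^2) := by
  simp [zfoot, cross3, e1, e2, e3, PiLp.inner_apply, Fin.sum_univ_three]
  field_simp
  ring

/-- for a ray `x = (d,m)` with `d ≠ ±e₃` and a stabilizer element
`(R_Z(γ), t·e₃)`, the transformed ray also has direction `≠ ±e₃` and
`g((R_Z(γ), t·e₃)·x) = t + g(x)`. -/
theorem statement9 (d m : E3) (h : isRay d m) (h1 : d ≠ e3) (h2 : d ≠ -e3)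
    (γ t : ℝ) :
    ((rayAct (RZ γ) (t • e3) d m).1 ≠ e3 ∧ (rayAct (RZ γ) (t • e3) d m).1 ≠ -e3) ∧
    zfoot (rayAct (RZ γ) (t • e3) d m).1 (rayAct (RZ γ) (t • e3) d m).2
      = t + zfoot d m := by
  obtain ⟨hnorm, hperp⟩ := h
  have hsum : d 0 ^ 2 + d 1 ^ 2 + d 2 ^ 2 = 1 := by
    have h' : ⟪d, d⟫_ℝ = 1 := by
      rw [real_inner_self_eq_norm_sq, hnorm]; norm_num
    rw [PiLp.inner_apply] at h'
    simpa [Fin.sum_univ_three, sq] using h'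
  have hpy : Real.cos γ ^ 2 + Real.sin γ ^ 2 = 1 := Real.cos_sq_add_sin_sq γ
  have hd2 : 1 - (d 2)^2 ≠ 0 := by
    intro h0
    have ha : d 0 = 0 := by nlinarith [sq_nonneg (d 0), sq_nonneg (d 1)]
    have hb : d 1 = 0 := by nlinarith [sq_nonneg (d 0), sq_nonneg (d 1)]
    have hc : d 2 = 1 ∨ d 2 = -1 := by
      have : (d 2 - 1) * (d 2 + 1) = 0 := by nlinarith
      rcases mul_eq_zero.mp this with h | h
      · left; linarith
      · right; linarith
    rcases hc with hc | hc
    · exact h1 (by ext i; fin_cases i <;> simp [e3, ha, hb, hc])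
    · exact h2 (by ext i; fin_cases i <;> simp [e3, ha, hb, hc])
  -- components of the transformed ray
  set d' := (rayAct (RZ γ) (t • e3) d m).1 with hd'
  set m' := (rayAct (RZ γ) (t • e3) d m).2 with hm'
  have hd'0 : d' 0 = Real.cos γ * d 0 - Real.sin γ * d 1 := by
    simp [hd', rayAct, mv, RZ, Matrix.mulVec, dotProduct, Fin.sum_univ_three]; ring
  have hd'1 : d' 1 = Real.sin γ * d 0 + Real.cos γ * d 1 := by
    simp [hd', rayAct, mv, RZ, Matrix.mulVec, dotProduct, Fin.sum_univ_three]
  have hd'2 : d' 2 = d 2 := by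
    simp [hd', rayAct, mv, RZ, Matrix.mulVec, dotProduct, Fin.sum_univ_three]
  have hm'0 : m' 0 = Real.cos γ * m 0 - Real.sin γ * m 1 - t * d' 1 := by
    simp [hm', hd', rayAct, mv, RZ, cross3, e3, Matrix.mulVec, dotProduct,
      Fin.sum_univ_three]; ring
  have hm'1 : m' 1 = Real.sin γ * m 0 + Real.cos γ * m 1 + t * d' 0 := by
    simp [hm', hd', rayAct, mv, RZ, cross3, e3, Matrix.mulVec, dotProduct,
      Fin.sum_univ_three]
  constructor
  · constructor
    · intro heq
      have h3 : d 2 = 1 := by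
        have h4 : d' 2 = e3 2 := by rw [heq]
        rw [hd'2] at h4; simpa [e3] using h4
      have ha : d 0 = 0 := by nlinarith [sq_nonneg (d 0), sq_nonneg (d 1)]
      have hb : d 1 = 0 := by nlinarith [sq_nonneg (d 0), sq_nonneg (d 1)]
      exact h1 (by ext i; fin_cases i <;> simp [e3, ha, hb, h3])
    · intro heq
      have h3 : d 2 = -1 := by
        have h4 : d' 2 = (-e3) 2 := by rw [heq]
        rw [hd'2] at h4; simpa [e3] using h4
      have ha : d 0 = 0 := by nlinarith [sq_nonneg (d 0), sq_nonneg (d 1)]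
      have hb : d 1 = 0 := by nlinarith [sq_nonneg (d 0), sq_nonneg (d 1)]
      exact h2 (by ext i; fin_cases i <;> simp [e3, ha, hb, h3])
  · rw [zfoot_eq d m hd2, zfoot_eq d' m' (by rw [hd'2]; exact hd2)]
    rw [hd'2]
    have key : d' 0 * m' 1 - d' 1 * m' 0
        = t * (1 - (d 2)^2) + (d 0 * m 1 - d 1 * m 0) := by
      rw [hd'0, hd'1, hm'0, hm'1, hd'0, hd'1]
      linear_combination (t * (d 0 ^ 2 + d 1 ^ 2) + d 0 * m 1 - d 1 * m 0) * hpy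
        + t * hsum
    rw [key]
    field_simp

end
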